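/- Bounding implies Suslin Bounding for Π¹₁ sets: assume every function from ω₁ to ω₁ is bounded on a club by a canonical function for an ordinal below ω₂. Let S be a tree on ω × ω, let A = ω^ω \ p[S] (a Π¹₁ set), and let f : ω₁ → A. Then there is a tree T on ω × ω₁ with p[T] = A and a club C ⊆ ω₁ such that for all α ∈ C, f(α) ∈ p[T ↾ (ω × α)]. -/

import Mathlib

open ZFSet FirstOrder

namespace P746

/-! ## First-order language with membership and a wellordering predicate -/

/-- The language with two binary relation symbols: `∈` and a wellordering `<*`. -/
def L : FirstOrder.Language where
  Functions := fun _ => Empty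
  Relations := fun n => match n with
    | 2 => Fin 2
    | _ => Empty

open Classical in
/-- The `L`-structure on (the members of) a ZF-set `M`, interpreting the first relation
as membership and the second as a given relation `r`. -/
def mStruc (M : ZFSet) (r : ZFSet → ZFSet → Prop) : L.Structure M.toSet where
  funMap := fun f _ => f.elim
  RelMap := fun {n} => match n with
    | 0 => fun R _ => R.elim
    | 1 => fun R _ => R.elim
    | 2 => fun R v => if R = (0 : Fin 2) then ((v 0 : ZFSet) ∈ (v 1 : ZFSet)) else r (v 0) (v 1)
    | (_+3) => fun R _ => R.elim

/-- `X` is an elementary substructure of `(M, ∈, r)`: `X ⊆ M` and every first-order formula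
with parameters from `X` holds in `X` iff it holds in `M`. -/
def ElemSub (M : ZFSet) (r : ZFSet → ZFSet → Prop) (X : ZFSet) : Prop :=
  ∃ h : X ⊆ M,
    ∀ (n : ℕ) (φ : L.Formula (Fin n)) (v : Fin n → X.toSet),
      (letI := mStruc M r
       φ.Realize (fun i => (⟨(v i : ZFSet), h (v i).2⟩ : M.toSet))) ↔
      (letI := mStruc X r; φ.Realize v)

/-- `r` is a wellordering of the members of `S`. -/
def WOn (S : ZFSet) (r : ZFSet → ZFSet → Prop) : Prop :=
  IsWellOrder S.toSet (Subrel r S.toSet)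

/-! ## Basic set-theoretic notions inside `ZFSet` -/

/-- `x` is a (von Neumann) ordinal: a transitive set of transitive sets. -/
def IsOrd (x : ZFSet) : Prop :=
  x.IsTransitive ∧ ∀ y ∈ x.toSet, ZFSet.IsTransitive y

/-- `w` is the first uncountable ordinal `ω₁`. -/
def IsOmega1 (w : ZFSet) : Prop :=
  IsOrd w ∧ ¬ w.toSet.Countable ∧ ∀ y ∈ w.toSet, y.toSet.Countable

/-- The set `[x]^{<ω}` of finite subsets of `x`. -/
noncomputable def finPow (x : ZFSet) : ZFSet :=
  ZFSet.sep (fun a => a.toSet.Finite) x.powerset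

/-- The set `[x]^n` of subsets of `x` of size `n`. -/
noncomputable def finPowCard (x : ZFSet) (n : ℕ) : ZFSet :=
  ZFSet.sep (fun a => a.toSet.Finite ∧ a.toSet.ncard = n) x.powerset

/-- `D^X_η`: the set of finite `a ⊆ η` such that `f(a) ∈ X` for every
`f : [η]^{|a|} → ω₁` belonging to `X` (`w` stands for `ω₁`). -/
def Dset (w X η : ZFSet) : Set ZFSet :=
  {a | a ∈ finPow η ∧ ∀ f ∈ X.toSet, ZFSet.IsFunc (finPowCard η a.toSet.ncard) w f →
    ∀ v : ZFSet, ZFSet.pair a v ∈ f → v ∈ X}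

/-- The Skolem hull of `X ∪ z` in `M` (with functions on `[η]^{<ω}`):
`X` together with all values `f(a)` for `f : [η]^{<ω} → M` in `X` and finite `a ⊆ z`. -/
def SkHull (M η X z : ZFSet) : Set ZFSet :=
  X.toSet ∪ {y | ∃ f ∈ X.toSet, ZFSet.IsFunc (finPow η) M f ∧
    ∃ a : ZFSet, a ∈ finPow η ∧ a ⊆ z ∧ ZFSet.pair a y ∈ f}

/-- `x` is hereditarily of cardinality less than `κ`. -/
def HerLt (κ : Cardinal) (x : ZFSet) : Prop :=
  ZFSet.mem_wf.fix (C := fun _ => Prop)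
    (fun y ih => Cardinal.mk y.toSet < κ ∧ ∀ z, ∀ h : z ∈ y, ih z h) x

/-- `H` is the collection `H(κ)` of sets hereditarily of cardinality `< κ`. -/
def IsHCard (κ : Cardinal) (H : ZFSet) : Prop :=
  ∀ x : ZFSet, x ∈ H ↔ HerLt κ x

/-! ## Clubs, stationarity and canonical functions on `ω₁` -/

noncomputable def omega1 : Ordinal.{0} := (Cardinal.aleph 1).ord
noncomputable def omega2 : Ordinal.{0} := (Cardinal.aleph 2).ord

/-- `C` is a club (closed unbounded) subset of `ω₁`. -/
def IsClub (C : Set Ordinal.{0}) : Prop :=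
  C ⊆ Set.Iio omega1 ∧
  (∀ o, o < omega1 → Order.IsSuccLimit o → (∀ b, b < o → ∃ c ∈ C, b ≤ c ∧ c < o) → o ∈ C) ∧
  (∀ b, b < omega1 → ∃ c ∈ C, b < c ∧ c < omega1)

/-- `S` is a stationary subset of `ω₁`. -/
def IsStat (S : Set Ordinal.{0}) : Prop :=
  ∀ C, IsClub C → (S ∩ C).Nonempty

/-- `f ≤ g` on a club. -/
def BddOnClub (f g : Ordinal.{0} → Ordinal.{0}) : Prop :=
  ∃ C, IsClub C ∧ ∀ α ∈ C, f α ≤ g α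

/-- `f < g` on a club. -/
def LtOnClub (f g : Ordinal.{0} → Ordinal.{0}) : Prop :=
  ∃ C, IsClub C ∧ ∀ α ∈ C, f α < g α

/-- `f` is a canonical function for `γ`: it is above every canonical function for every `β < γ`
(mod clubs), and minimally so.  (This is the standard recursive characterization of the
statement that the empty condition in `P(ω₁)/NS_{ω₁}` forces `j(f)(ω₁^V) = γ`.) -/
def Canonical : Ordinal.{0} → (Ordinal.{0} → Ordinal.{0}) → Prop :=
  Ordinal.lt_wf.fix (C := fun _ => (Ordinal.{0} → Ordinal.{0}) → Prop)
    (fun γ ih f =>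
      (∀ β, ∀ hβ : β < γ, ∀ g, ih β hβ g → LtOnClub g f) ∧
      ∀ h : Ordinal.{0} → Ordinal.{0},
        (∀ β, ∀ hβ : β < γ, ∀ g, ih β hβ g → LtOnClub g h) → BddOnClub f h)

/-- Every `f : ω₁ → ω₁` is bounded on a club by a canonical function for some `γ < ω₂`. -/
def Bounding : Prop :=
  ∀ f : Ordinal.{0} → Ordinal.{0}, (∀ α, α < omega1 → f α < omega1) →
    ∃ γ, γ < omega2 ∧ ∃ g, Canonical γ g ∧ BddOnClub f g

/-- `o` is the order type of the set of ordinals `s`: there is a strictly increasing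
enumeration of `s` indexed by the ordinals below `o`. -/
def IsOtypOf (o : Ordinal.{0}) (s : Set Ordinal.{0}) : Prop :=
  ∃ e : Ordinal.{0} → Ordinal.{0},
    (∀ i j, i < j → j < o → e i < e j) ∧
    (∀ i, i < o → e i ∈ s) ∧ ∀ x ∈ s, ∃ i, i < o ∧ e i = x

/-! ## Trees on `ω × ω` and `ω × Ord` (as sets of pairs of lists) -/

def IsTreeN (S : Set (List ℕ × List ℕ)) : Prop :=
  ∀ p ∈ S, p.1.length = p.2.length ∧ ∀ n : ℕ, (p.1.take n, p.2.take n) ∈ S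

def IsTreeO (T : Set (List ℕ × List Ordinal.{0})) : Prop :=
  ∀ p ∈ T, p.1.length = p.2.length ∧ ∀ n : ℕ, (p.1.take n, p.2.take n) ∈ T

/-- Projection of a tree on `ω × ω`. -/
def projN (S : Set (List ℕ × List ℕ)) : Set (ℕ → ℕ) :=
  {x | ∃ y : ℕ → ℕ, ∀ n : ℕ,
    (List.ofFn (fun i : Fin n => x i), List.ofFn (fun i : Fin n => y i)) ∈ S}

/-- Projection of a tree on `ω × Ord`. -/
def projO (T : Set (List ℕ × List Ordinal.{0})) : Set (ℕ → ℕ) :=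
  {x | ∃ y : ℕ → Ordinal.{0}, ∀ n : ℕ,
    (List.ofFn (fun i : Fin n => x i), List.ofFn (fun i : Fin n => y i)) ∈ T}

/-- Projection of the restricted tree `T ↾ (ω × α)`. -/
def projOBelow (T : Set (List ℕ × List Ordinal.{0})) (α : Ordinal.{0}) : Set (ℕ → ℕ) :=
  {x | ∃ y : ℕ → Ordinal.{0}, (∀ i, y i < α) ∧ ∀ n : ℕ,
    (List.ofFn (fun i : Fin n => x i), List.ofFn (fun i : Fin n => y i)) ∈ T}

/-! ## Names, evaluation, and generic extensions -/

open Classical in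
/-- Evaluation of a `P`-name `τ` by a filter `G`:
`val G τ = { val G σ : ∃ p ∈ G, (σ, p) ∈ τ }`, by recursion on rank. -/
noncomputable def val (G : ZFSet) : ZFSet → ZFSet :=
  WellFounded.fix (InvImage.wf ZFSet.rank Ordinal.lt_wf)
    (fun τ ih =>
      ZFSet.sUnion <| ZFSet.sep
        (fun y => ∃ z ∈ τ.toSet,
          if h : ∃ σ, ZFSet.rank σ < ZFSet.rank τ ∧ ∃ p ∈ G.toSet, z = ZFSet.pair σ p
          then y = {ih h.choose h.choose_spec.1}
          else y = ∅)
        (ZFSet.powerset (ZFSet.sUnion (ZFSet.sUnion (ZFSet.sUnion τ)))))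

/-- The universe is a generic extension `V[G]` of the transitive class `V` by the
partial order `(P, ≤)` (with `le` the set of pairs `(p,q)` with `p ≤ q`), `G ⊆ P`
a filter meeting every dense subset of `P` lying in `V`, and every set being the
value of a `P`-name in `V`. -/
def IsGenericExt (V : Set ZFSet) (P le G : ZFSet) : Prop :=
  (∀ x ∈ V, ∀ y, y ∈ x → y ∈ V) ∧ P ∈ V ∧ le ∈ V ∧
  (∀ p, p ∈ P → ZFSet.pair p p ∈ le) ∧
  (∀ p q z, ZFSet.pair p q ∈ le → ZFSet.pair q z ∈ le → ZFSet.pair p z ∈ le) ∧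
  (∀ p q, ZFSet.pair p q ∈ le → p ∈ P ∧ q ∈ P) ∧
  G ⊆ P ∧ G ≠ ∅ ∧
  (∀ p q, p ∈ G → q ∈ G → ∃ r, r ∈ G ∧ ZFSet.pair r p ∈ le ∧ ZFSet.pair r q ∈ le) ∧
  (∀ p q, p ∈ G → q ∈ P → ZFSet.pair p q ∈ le → q ∈ G) ∧
  (∀ D, D ∈ V → D ⊆ P → (∀ p, p ∈ P → ∃ q, q ∈ D ∧ ZFSet.pair q p ∈ le) →
    ∃ q, q ∈ G ∧ q ∈ D) ∧
  (∀ x : ZFSet, ∃ τ, τ ∈ V ∧ x = val G τ)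

/-- In the generic extension, the forcing added no new `ω`-sequences of ordinals;
i.e. `P` is `(ω, ∞)`-distributive. -/
def Distributive (V : Set ZFSet) : Prop :=
  ∀ f o : ZFSet, (o.IsTransitive ∧ ∀ y ∈ o.toSet, ZFSet.IsTransitive y) →
    ZFSet.IsFunc ZFSet.omega o f → f ∈ V

/-! ## Ultrafilters and completeness -/

/-- `U` is an ultrafilter on the set `S`. -/
def IsUltraOn (S U : ZFSet) : Prop :=
  U ⊆ S.powerset ∧ S ∈ U ∧ (∅ : ZFSet) ∉ U ∧
  (∀ A B, A ∈ U → A ⊆ B → B ⊆ S → B ∈ U) ∧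
  (∀ A B, A ∈ U → B ∈ U → A ∩ B ∈ U) ∧
  (∀ A, A ⊆ S → (A ∈ U ∨ ZFSet.sep (fun x => x ∉ A) S ∈ U))

/-- `U` is `γ`-complete with respect to families of members of `U` lying in `W`. -/
def CompleteOn (W : Set ZFSet) (γ : Cardinal.{1}) (S U : ZFSet) : Prop :=
  ∀ F, F ∈ W → F ≠ ∅ → F ⊆ U → Cardinal.mk F.toSet < γ →
    ZFSet.sep (fun x => ∀ A ∈ F.toSet, x ∈ A) S ∈ U

/-! ## Internal finite sequences, trees and homogeneity -/

/-- The set `κ^{<ω}` of finite sequences from `κ` (functions `n → κ`, `n < ω`). -/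
noncomputable def seqs (κ : ZFSet) : ZFSet :=
  ZFSet.sep (fun f => ∃ n, n ∈ ZFSet.omega ∧ ZFSet.IsFunc n κ f)
    (((κ ∪ ZFSet.omega).powerset.powerset).powerset)

/-- The set of functions `a → b` as a ZF-set. -/
noncomputable def funsZ (a b : ZFSet) : ZFSet :=
  ZFSet.sep (fun f => ZFSet.IsFunc a b f) (((a ∪ b).powerset.powerset).powerset)

/-- Restriction of a (set-)function `f` to `m`. -/
noncomputable def restr (f m : ZFSet) : ZFSet :=
  ZFSet.sep (fun p => ∃ i v, i ∈ m ∧ p = ZFSet.pair i v) f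

/-- `T` is a tree on `ω × κ`: a set of pairs of finite sequences of equal length,
closed under restriction. -/
def IsTreeZ (κ T : ZFSet) : Prop :=
  ∀ z, z ∈ T → ∃ n s t, n ∈ ZFSet.omega ∧ ZFSet.IsFunc n ZFSet.omega s ∧
    ZFSet.IsFunc n κ t ∧ z = ZFSet.pair s t ∧
    ∀ m, m ∈ n → ZFSet.pair (restr s m) (restr t m) ∈ T

/-- `x ∈ p[T]`, computed in `W`: there is a branch witness `y ∈ W`. -/
def inProjZ (W : Set ZFSet) (κ T x : ZFSet) : Prop :=
  ∃ y, y ∈ W ∧ ZFSet.IsFunc ZFSet.omega κ y ∧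
    ∀ n, n ∈ ZFSet.omega → ZFSet.pair (restr x n) (restr y n) ∈ T

/-- `x ∈ p[T ↾ (ω × A)]` where the branch takes values satisfying `Q`. -/
def inProjVal (κ T x : ZFSet) (Q : ZFSet → Prop) : Prop :=
  ∃ y, ZFSet.IsFunc ZFSet.omega κ y ∧ (∀ i v, ZFSet.pair i v ∈ y → Q v) ∧
    ∀ n, n ∈ ZFSet.omega → ZFSet.pair (restr x n) (restr y n) ∈ T

/-- The tower `⟨π(x ↾ k) : k < ω⟩` is countably complete, relativized to `W`. -/
def CCTower (W : Set ZFSet) (κ π x : ZFSet) : Prop :=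
  ∀ Af, Af ∈ W → ZFSet.IsFunc ZFSet.omega ((seqs κ).powerset) Af →
    (∀ n U a, n ∈ ZFSet.omega → ZFSet.pair (restr x n) U ∈ π →
      ZFSet.pair n a ∈ Af → a ∈ U) →
    ∃ y, y ∈ W ∧ ZFSet.IsFunc ZFSet.omega κ y ∧
      ∀ n a, n ∈ ZFSet.omega → ZFSet.pair n a ∈ Af → restr y n ∈ a

/-- `(T, π)` is a `γ`-homogeneous tree system on `ω × κ`, relativized to the class `W`. -/
def HomSys (W : Set ZFSet) (γ : Cardinal.{1}) (κ T π : ZFSet) : Prop :=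
  IsTreeZ κ T ∧
  (∀ z, z ∈ π → ∃ n s U, n ∈ ZFSet.omega ∧ ZFSet.IsFunc n ZFSet.omega s ∧
    z = ZFSet.pair s U ∧ IsUltraOn (funsZ n κ) U ∧ CompleteOn W γ (funsZ n κ) U ∧
    ZFSet.sep (fun t => ZFSet.pair s t ∈ T) (funsZ n κ) ∈ U) ∧
  (∀ s U U', ZFSet.pair s U ∈ π → ZFSet.pair s U' ∈ π → U = U') ∧
  (∀ x, x ∈ W → ZFSet.IsFunc ZFSet.omega ZFSet.omega x →
    (inProjZ W κ T x ↔
      ((∀ n, n ∈ ZFSet.omega → ∃ U, ZFSet.pair (restr x n) U ∈ π) ∧ CCTower W κ π x)))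

/-- `A` is a `γ`-homogeneously Suslin set of reals, in the sense of the class `W`. -/
def HomSuslinIn (W : Set ZFSet) (γ : Cardinal.{1}) (A : ZFSet) : Prop :=
  A ⊆ funsZ ZFSet.omega ZFSet.omega ∧
  ∃ κ T π, κ ∈ W ∧ T ∈ W ∧ π ∈ W ∧
    (κ.IsTransitive ∧ ∀ y ∈ κ.toSet, ZFSet.IsTransitive y) ∧
    HomSys W γ κ T π ∧
    ∀ x, ZFSet.IsFunc ZFSet.omega ZFSet.omega x → (x ∈ A ↔ inProjZ W κ T x)


/-! ## Additional notions -/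

/-- `γ` is a regular (limit) cardinal, as a ZF-set ordinal: the range of any function
from a smaller ordinal into `γ` is bounded. -/
def IsRegOrd (γ : ZFSet) : Prop :=
  IsOrd γ ∧ (∀ o ∈ γ.toSet, ∃ o' ∈ γ.toSet, o ∈ o') ∧
  ∀ b f, b ∈ γ → ZFSet.IsFunc b γ f → ∃ o ∈ γ.toSet, ∀ x v, ZFSet.pair x v ∈ f → v ∈ o

/-- `Y` is a minimal `(η, λ)`-extension of `X` (inside the model `M` with wellordering `r`):
`Y ≺ M`, `Y ∩ η = X ∩ η`, and `Y` is the Skolem hull of `X ∪ A` for some `A ⊆ λ`. -/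
def IsMinExt (M : ZFSet) (r : ZFSet → ZFSet → Prop) (η lam X Y : ZFSet) : Prop :=
  ElemSub M r Y ∧ Y ∩ η = X ∩ η ∧ ∃ A : ZFSet, A ⊆ lam ∧ Y.toSet = SkHull M lam X A

/-- `U` is a normal measure on the (measurable) cardinal `λ`. -/
def IsNormalMeasure (lam U : ZFSet) : Prop :=
  IsOrd lam ∧ IsUltraOn lam U ∧
  CompleteOn Set.univ (Cardinal.mk lam.toSet) lam U ∧
  (∀ x, x ∈ lam → ({x} : ZFSet) ∉ U) ∧
  ∀ f A, A ∈ U → ZFSet.IsFunc lam lam f →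
    (∀ x v, x ∈ A → ZFSet.pair x v ∈ f → (v ∈ x ∨ x = ∅)) →
    ∃ B c, B ∈ U ∧ ∀ x, x ∈ B → ZFSet.pair x c ∈ f

/-- `g` is the `ξ`-th ordinal of `M` (counting from `0`): the ordinals of `M` below `g`
have order type `ξ`. -/
def NthOrdOf (M : ZFSet) (ξ : Ordinal.{0}) (g : ZFSet) : Prop :=
  IsOrd g ∧ g ∈ M ∧
  IsOtypOf ξ (ZFSet.rank '' {x : ZFSet | x ∈ M.toSet ∧ IsOrd x ∧ x ∈ g})

/-- The relation `≤_o` on a tree `T` on `ω × ω₁`: one sequence extends the other, and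
the first coordinate of the last element of the longer one codes that the length of the
first is below the length of the second in the coded ordering.  (`decode k m n` means:
the value `k` codes `m` before `n`.) -/
def leO (T : Set (List ℕ × List Ordinal.{0})) (decode : ℕ → ℕ → ℕ → Prop)
    (p q : List ℕ × List Ordinal.{0}) : Prop :=
  p ∈ T ∧ q ∈ T ∧
  ((p.1 <+: q.1 ∧ p.2 <+: q.2 ∧ p.1.length < q.1.length ∧
      decode (q.1.getD (q.1.length - 1) 0) p.1.length q.1.length) ∨
   (q.1 <+: p.1 ∧ q.2 <+: p.2 ∧ q.1.length < p.1.length ∧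
      decode (p.1.getD (p.1.length - 1) 0) p.1.length q.1.length))

/-- The binary relation on `ω` coded by `x : ω → ω`:  comparisons of `n` with smaller
numbers are decided by `x (n - 1)`. -/
def codedRel (decode : ℕ → ℕ → ℕ → Prop) (x : ℕ → ℕ) (m n : ℕ) : Prop :=
  (m < n ∧ decode (x (n - 1)) m n) ∨ (n < m ∧ decode (x (m - 1)) m n)


theorem omega1_isLimit : Order.IsSuccLimit omega1 := Cardinal.isSuccLimit_ord (Cardinal.aleph0_le_aleph 1)

theorem sup_lt_omega1 {ι : Type} [Countable ι] (g : ι → Ordinal.{0})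
    (h : ∀ i, g i < omega1) : (⨆ i, g i) < omega1 := by
  apply Ordinal.iSup_lt_ord _ h
  rw [omega1, Cardinal.isRegular_aleph_one.cof_eq]
  exact lt_of_le_of_lt Cardinal.mk_le_aleph0 Cardinal.aleph0_lt_aleph_one

theorem bsup_lt_omega1 {o : Ordinal.{0}} (ho : o < omega1) (g : ∀ a < o, Ordinal.{0})
    (h : ∀ a ha, g a ha < omega1) : Ordinal.bsup o g < omega1 := by
  apply Ordinal.bsup_lt_ord _ h
  rw [omega1, Cardinal.isRegular_aleph_one.cof_eq]
  rwa [omega1, Cardinal.lt_ord] at ho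

/-- sup of a strictly increasing ℕ-sequence below ω₁ -/
theorem seq_sup_mem (v : ℕ → Ordinal.{0}) (hv : ∀ n, v n < v (n+1))
    (hb : ∀ n, v n < omega1) :
    (⨆ n, v n) < omega1 ∧ Order.IsSuccLimit ((⨆ n, v n) : Ordinal) ∧ ∀ n, v n < ⨆ n, v n := by
  have hmono : StrictMono v := strictMono_nat_of_lt_succ hv
  have hlt : ∀ n, v n < ⨆ n, v n := fun n =>
    lt_of_lt_of_le (hv n) (Ordinal.le_iSup v (n+1))
  refine ⟨sup_lt_omega1 v hb, Ordinal.isSuccLimit_iff.2 ⟨?_, Order.isSuccPrelimit_iff_succ_lt.2 ?_⟩, hlt⟩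
  · exact fun h => by
      have := hlt 0; rw [h] at this; exact (not_lt_zero this)
  · intro a ha
    rw [Ordinal.lt_iSup_iff] at ha
    obtain ⟨n, hn⟩ := ha
    exact lt_of_le_of_lt (Order.succ_le_of_lt hn) (hlt n)

theorem isClub_inter {C D : Set Ordinal.{0}} (hC : IsClub C) (hD : IsClub D) :
    IsClub (C ∩ D) := by
  obtain ⟨hC1, hC2, hC3⟩ := hC
  obtain ⟨hD1, hD2, hD3⟩ := hD
  refine ⟨fun x hx => hC1 hx.1, ?_, ?_⟩
  · intro o ho hol hcof
    exact ⟨hC2 o ho hol (fun b hb => (hcof b hb).imp fun c hc => ⟨hc.1.1, hc.2⟩),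
      hD2 o ho hol (fun b hb => (hcof b hb).imp fun c hc => ⟨hc.1.2, hc.2⟩)⟩
  · intro b hb
    choose F hF1 hF2 hF3 using hC3
    choose G hG1 hG2 hG3 using hD3
    set F' : Ordinal.{0} → Ordinal.{0} := fun x => if h : x < omega1 then F x h else 0 with hF'
    set G' : Ordinal.{0} → Ordinal.{0} := fun x => if h : x < omega1 then G x h else 0 with hG'
    set v : ℕ → Ordinal.{0} := fun n => Nat.rec b (fun _ w => G' (F' w)) n with hvdef
    have hv0 : v 0 = b := rfl
    have hvs : ∀ n, v (n+1) = G' (F' (v n)) := fun n => rfl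
    have key : ∀ n, v n < omega1 ∧ v n < F' (v n) ∧ F' (v n) ∈ C ∧
        F' (v n) < G' (F' (v n)) ∧ G' (F' (v n)) ∈ D ∧ G' (F' (v n)) < omega1 := by
      intro n
      induction n with
      | zero =>
        have h1 : v 0 < omega1 := hb
        have hFv : F' (v 0) = F (v 0) h1 := dif_pos h1
        have h2 : F' (v 0) < omega1 := by rw [hFv]; exact hF3 _ h1
        have hGv : G' (F' (v 0)) = G (F' (v 0)) h2 := dif_pos h2
        refine ⟨h1, ?_, ?_, ?_, ?_, ?_⟩
        · rw [hFv]; exact hF2 _ h1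
        · rw [hFv]; exact hF1 _ h1
        · rw [hGv]; exact hG2 _ h2
        · rw [hGv]; exact hG1 _ h2
        · rw [hGv]; exact hG3 _ h2
      | succ n ih =>
        have h1 : v (n+1) < omega1 := by rw [hvs]; exact ih.2.2.2.2.2
        have hFv : F' (v (n+1)) = F (v (n+1)) h1 := dif_pos h1
        have h2 : F' (v (n+1)) < omega1 := by rw [hFv]; exact hF3 _ h1
        have hGv : G' (F' (v (n+1))) = G (F' (v (n+1))) h2 := dif_pos h2
        refine ⟨h1, ?_, ?_, ?_, ?_, ?_⟩
        · rw [hFv]; exact hF2 _ h1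
        · rw [hFv]; exact hF1 _ h1
        · rw [hGv]; exact hG2 _ h2
        · rw [hGv]; exact hG1 _ h2
        · rw [hGv]; exact hG3 _ h2
    have hvinc : ∀ n, v n < v (n+1) := fun n => by
      rw [hvs]; exact lt_trans (key n).2.1 (key n).2.2.2.1
    have hvb : ∀ n, v n < omega1 := fun n => (key n).1
    obtain ⟨hslt, hslim, hless⟩ := seq_sup_mem v hvinc hvb
    set o := ⨆ n, v n with ho
    have hoC : o ∈ C := by
      apply hC2 o hslt hslim
      intro a ha
      rw [Ordinal.lt_iSup_iff] at ha
      obtain ⟨n, hn⟩ := ha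
      exact ⟨F' (v n), (key n).2.2.1, le_of_lt (lt_trans hn (key n).2.1),
        lt_of_lt_of_le (lt_of_lt_of_le (key n).2.2.2.1 (le_of_eq (hvs n).symm)) (Ordinal.le_iSup v (n+1))⟩
    have hoD : o ∈ D := by
      apply hD2 o hslt hslim
      intro a ha
      rw [Ordinal.lt_iSup_iff] at ha
      obtain ⟨n, hn⟩ := ha
      refine ⟨v (n+1), ?_, le_of_lt (lt_trans hn (hvinc n)), hless (n+1)⟩
      rw [hvs]; exact (key n).2.2.2.2.1
    exact ⟨o, ⟨hoC, hoD⟩, hless 0, hslt⟩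

theorem isClub_tail {b : Ordinal.{0}} (hb : b < omega1) :
    IsClub {c : Ordinal.{0} | b < c ∧ c < omega1} := by
  refine ⟨fun x hx => hx.2, ?_, ?_⟩
  · intro o ho hol hcof
    obtain ⟨c, hc, _, hco⟩ := hcof 0 hol.pos
    exact ⟨lt_trans hc.1 hco, ho⟩
  · intro b' hb'
    refine ⟨max b b' + 1, ⟨?_, ?_⟩, ?_, ?_⟩
    · exact lt_of_le_of_lt (le_max_left _ _) (Order.lt_succ _)
    · exact omega1_isLimit.succ_lt (max_lt hb hb')
    · exact lt_of_le_of_lt (le_max_right _ _) (Order.lt_succ _)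
    · exact omega1_isLimit.succ_lt (max_lt hb hb')

def Cpts (u : Ordinal.{0} → Ordinal.{0}) : Set Ordinal.{0} :=
  {α | α < omega1 ∧ ∀ ξ, ξ < α → u ξ < α}

theorem isClub_cpts (u : Ordinal.{0} → Ordinal.{0})
    (hu : ∀ ξ, ξ < omega1 → u ξ < omega1) : IsClub (Cpts u) := by
  refine ⟨fun x hx => hx.1, ?_, ?_⟩
  · intro o ho hol hcof
    refine ⟨ho, fun ξ hξ => ?_⟩
    obtain ⟨c, hc, hc1, hc2⟩ := hcof (ξ + 1) (hol.succ_lt hξ)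
    exact lt_trans (hc.2 ξ (lt_of_lt_of_le (Order.lt_succ _) hc1)) hc2
  · intro b hb
    set s : Ordinal.{0} → Ordinal.{0} :=
      fun w => max (w+1) (Ordinal.bsup w (fun ξ _ => u ξ + 1)) with hs
    have hslt : ∀ w, w < omega1 → s w < omega1 := by
      intro w hw
      apply max_lt (omega1_isLimit.succ_lt hw)
      exact bsup_lt_omega1 hw _ (fun a ha =>
        omega1_isLimit.succ_lt (hu a (lt_trans ha hw)))
    set v : ℕ → Ordinal.{0} := fun n => Nat.rec b (fun _ w => s w) n with hv
    have hvs : ∀ n, v (n+1) = s (v n) := fun _ => rfl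
    have hvb : ∀ n, v n < omega1 := by
      intro n; induction n with
      | zero => exact hb
      | succ n ih => rw [hvs]; exact hslt _ ih
    have hvinc : ∀ n, v n < v (n+1) := fun n => by
      rw [hvs]; exact lt_of_lt_of_le (Order.lt_succ _) (le_max_left _ _)
    obtain ⟨hslt', hslim, hless⟩ := seq_sup_mem v hvinc hvb
    refine ⟨⨆ n, v n, ⟨hslt', fun ξ hξ => ?_⟩, hless 0, hslt'⟩
    rw [Ordinal.lt_iSup_iff] at hξ
    obtain ⟨n, hn⟩ := hξ
    have : u ξ + 1 ≤ v (n+1) := by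
      rw [hvs]
      exact le_trans (Ordinal.le_bsup (fun ξ _ => u ξ + 1) ξ hn) (le_max_right _ _)
    exact lt_of_lt_of_le (lt_of_lt_of_le (Order.lt_succ _) this) (le_of_lt (hless (n+1)))
instance otpWO (s : Set Ordinal.{0}) : IsWellOrder (Subtype s) (Subrel ((· < ·) : Ordinal.{0} → Ordinal.{0} → Prop) s) :=
  inferInstanceAs (IsWellOrder (Subtype (fun x => x ∈ s)) (Subrel ((· < ·) : Ordinal.{0} → Ordinal.{0} → Prop) (fun x => x ∈ s)))
noncomputable def otp (s : Set Ordinal.{0}) : Ordinal.{1} :=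
  Ordinal.type (Subrel ((· < ·) : Ordinal.{0} → Ordinal.{0} → Prop) s)

theorem otp_Iio (b : Ordinal.{0}) : otp (Set.Iio b) = Ordinal.lift.{1} b := by
  rw [← Ordinal.typein_ordinal]; exact Ordinal.type_subrel ((· < ·) : Ordinal.{0} → Ordinal.{0} → Prop) b

theorem otp_mono {s t : Set Ordinal.{0}} (h : s ⊆ t) : otp s ≤ otp t := by
  rw [otp, otp, Ordinal.type_le_iff']
  exact ⟨⟨⟨Set.inclusion h, Set.inclusion_injective h⟩, Iff.rfl⟩⟩

theorem otp_lt_of_top {s t : Set Ordinal.{0}} {b : Ordinal.{0}} (hst : s ⊆ t) (hb : b ∈ t)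
    (hs : ∀ x ∈ s, x < b) : otp s < otp t := by
  have h1 : otp s ≤ Ordinal.typein (Subrel ((· < ·) : Ordinal.{0} → Ordinal.{0} → Prop) t) ⟨b, hb⟩ := by
    rw [← Ordinal.type_subrel, otp, Ordinal.type_le_iff']
    refine ⟨⟨⟨fun x => ⟨⟨x.1, hst x.2⟩, hs x.1 x.2⟩, ?_⟩, Iff.rfl⟩⟩
    intro x y hxy
    have h2 : ((x.1 : Ordinal.{0})) = (y.1 : Ordinal.{0}) := congrArg (fun z => ((z : { y : t // y.1 < b }) : t).1) hxy
    exact Subtype.ext h2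
  exact lt_of_le_of_lt h1 (Ordinal.typein_lt_type _ _)

theorem emb_of_le_otp {β : Ordinal.{0}} {s : Set Ordinal.{0}}
    (h : Ordinal.lift.{1} β ≤ otp s) :
    ∃ j : Ordinal.{0} → Ordinal.{0},
      (∀ ξ ζ, ξ < ζ → ζ < β → j ξ < j ζ) ∧ ∀ ξ, ξ < β → j ξ ∈ s := by
  rw [← otp_Iio, otp, otp, Ordinal.type_le_iff] at h
  obtain ⟨emb⟩ := h
  refine ⟨fun ξ => if h : ξ < β then (emb ⟨ξ, h⟩).1 else 0, ?_, ?_⟩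
  · intro ξ ζ h1 h2
    simp only [dif_pos (h1.trans h2), dif_pos h2]
    exact emb.map_rel_iff.2 h1
  · intro ξ h1
    simp only [dif_pos h1]
    exact (emb ⟨ξ, h1⟩).2

theorem isClub_Iio : IsClub (Set.Iio omega1) := by
  refine ⟨fun x hx => hx, fun o ho _ _ => ho, fun b hb => ?_⟩
  exact ⟨b + 1, omega1_isLimit.succ_lt hb, Order.lt_succ _, omega1_isLimit.succ_lt hb⟩

theorem omega1_pos : (0 : Ordinal.{0}) < omega1 := omega1_isLimit.pos

theorem omega1_lt_omega2 : omega1 < omega2 := by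
  rw [omega1, omega2, Cardinal.ord_lt_ord]
  exact Cardinal.aleph_lt_aleph.2 one_lt_two

/-! ### Surjections onto initial segments -/

theorem exists_surj {γ : Ordinal.{0}} (h0 : 0 < γ) (h2 : γ < omega2) :
    ∃ e : Ordinal.{0} → Ordinal.{0}, (∀ ξ, e ξ < γ) ∧
      ∀ ζ, ζ < γ → ∃ ξ, ξ < omega1 ∧ e ξ = ζ := by
  classical
  have hcard : γ.card ≤ Cardinal.aleph 1 := by
    have h3 : γ.card < Cardinal.aleph 2 := Cardinal.lt_ord.1 h2
    have h4 : Cardinal.aleph 2 = Order.succ (Cardinal.aleph 1) := by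
      rw [← Cardinal.aleph_succ]
      norm_num
    rw [h4, Order.lt_succ_iff] at h3
    exact h3
  have hmk : Cardinal.mk (Set.Iio γ) ≤ Cardinal.mk (Set.Iio omega1) := by
    rw [Ordinal.mk_Iio_ordinal, Ordinal.mk_Iio_ordinal, Cardinal.lift_le]
    rw [omega1, Cardinal.card_ord]
    exact hcard
  obtain ⟨ι⟩ := (Cardinal.le_def _ _).1 hmk
  refine ⟨fun ξ => if h : ∃ ζ : Set.Iio γ, ((ι ζ : Set.Iio omega1) : Ordinal.{0}) = ξ
    then (h.choose : Ordinal.{0}) else 0, ?_, ?_⟩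
  · intro ξ
    by_cases h : ∃ ζ : Set.Iio γ, ((ι ζ : Set.Iio omega1) : Ordinal.{0}) = ξ
    · simp only [dif_pos h]; exact h.choose.2
    · simp only [dif_neg h]; exact h0
  · intro ζ hζ
    refine ⟨(ι ⟨ζ, hζ⟩ : Set.Iio omega1), (ι ⟨ζ, hζ⟩).2, ?_⟩
    have h : ∃ ζ' : Set.Iio γ, ((ι ζ' : Set.Iio omega1) : Ordinal.{0}) =
        ((ι ⟨ζ, hζ⟩ : Set.Iio omega1) : Ordinal.{0}) := ⟨⟨ζ, hζ⟩, rfl⟩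
    simp only [dif_pos h]
    have := h.choose_spec
    have h5 : ι h.choose = ι ⟨ζ, hζ⟩ := Subtype.ext this
    have h6 := ι.injective h5
    rw [h6]

noncomputable def eFun (γ : Ordinal.{0}) : Ordinal.{0} → Ordinal.{0} :=
  if h : 0 < γ ∧ γ < omega2 then (exists_surj h.1 h.2).choose else fun _ => 0

theorem eFun_lt {γ : Ordinal.{0}} (h0 : 0 < γ) (h2 : γ < omega2) (ξ : Ordinal.{0}) :
    eFun γ ξ < γ := by
  rw [eFun, dif_pos ⟨h0, h2⟩]
  exact (exists_surj h0 h2).choose_spec.1 ξ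

theorem eFun_surj {γ : Ordinal.{0}} (h0 : 0 < γ) (h2 : γ < omega2) {ζ : Ordinal.{0}}
    (hζ : ζ < γ) : ∃ ξ, ξ < omega1 ∧ eFun γ ξ = ζ := by
  rw [eFun, dif_pos ⟨h0, h2⟩]
  exact (exists_surj h0 h2).choose_spec.2 ζ hζ

/-! ### `otp0` : order types in universe 0 -/

open Classical in
noncomputable def otp0 (s : Set Ordinal.{0}) : Ordinal.{0} :=
  if h : ∃ a : Ordinal.{0}, Ordinal.lift.{1} a = otp s then h.choose else 0

theorem lift_otp0 {s : Set Ordinal.{0}} {δ : Ordinal.{0}} (hs : ∀ x ∈ s, x < δ) :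
    Ordinal.lift.{1} (otp0 s) = otp s := by
  have hle : otp s ≤ Ordinal.lift.{1} δ := by
    rw [← otp_Iio]; exact otp_mono hs
  obtain ⟨a, ha⟩ := Ordinal.mem_range_lift_of_le hle
  have h : ∃ a : Ordinal.{0}, Ordinal.lift.{1} a = otp s := ⟨a, ha⟩
  rw [otp0, dif_pos h]
  exact h.choose_spec

/-! ### The functions `hStar` -/

noncomputable def hStar (γ : Ordinal.{0}) : Ordinal.{0} → Ordinal.{0} :=
  if γ = 0 then fun _ => 0 else fun α => otp0 (eFun γ '' Set.Iio α)

theorem hStar_lt_hStar {β γ : Ordinal.{0}} (hβγ : β < γ) (hγ : γ < omega2) :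
    LtOnClub (hStar β) (hStar γ) := by
  classical
  have hγ0 : 0 < γ := lt_of_le_of_lt (zero_le (a := β)) hβγ
  have hγne : γ ≠ 0 := hγ0.ne'
  have himgbd : ∀ α : Ordinal.{0}, ∀ x ∈ eFun γ '' Set.Iio α, x < γ := by
    rintro α x ⟨ξ, _, rfl⟩; exact eFun_lt hγ0 hγ ξ
  rcases eq_or_lt_of_le (zero_le (a := β)) with hβ0 | hβ0
  · -- β = 0
    refine ⟨{c : Ordinal.{0} | 0 < c ∧ c < omega1}, isClub_tail omega1_pos, ?_⟩
    intro α hα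
    have h1 : hStar β α = 0 := by rw [hStar, ← hβ0, if_pos rfl]
    have h2 : hStar γ α = otp0 (eFun γ '' Set.Iio α) := by rw [hStar, if_neg hγne]
    rw [h1, h2, pos_iff_ne_zero]
    intro h0
    have : Ordinal.lift.{1} (otp0 (eFun γ '' Set.Iio α)) = otp (eFun γ '' Set.Iio α) :=
      lift_otp0 (himgbd α)
    rw [h0, Ordinal.lift_zero] at this
    have hne : Nonempty (eFun γ '' Set.Iio α : Set Ordinal.{0}) :=
      ⟨⟨eFun γ 0, Set.mem_image_of_mem _ hα.1⟩⟩
    have := this.symm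
    rw [otp, Ordinal.type_eq_zero_iff_isEmpty] at this
    exact this.false hne.some
  · -- 0 < β < γ
    have hβ2 : β < omega2 := hβγ.trans hγ
    have hβne : β ≠ 0 := hβ0.ne'
    -- choose preimages
    have hp : ∀ ξ : Ordinal.{0}, ∃ ξ', ξ' < omega1 ∧ eFun γ ξ' = eFun β ξ :=
      fun ξ => eFun_surj hγ0 hγ ((eFun_lt hβ0 hβ2 ξ).trans hβγ)
    choose p hp1 hp2 using hp
    obtain ⟨q, hq1, hq2⟩ := eFun_surj hγ0 hγ hβγ
    refine ⟨Cpts p ∩ {c : Ordinal.{0} | q < c ∧ c < omega1},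
      isClub_inter (isClub_cpts p (fun ξ _ => hp1 ξ)) (isClub_tail hq1), ?_⟩
    rintro α ⟨hcp, hqα, hα1⟩
    have h1 : hStar β α = otp0 (eFun β '' Set.Iio α) := by rw [hStar, if_neg hβne]
    have h2 : hStar γ α = otp0 (eFun γ '' Set.Iio α) := by rw [hStar, if_neg hγne]
    rw [h1, h2, ← Ordinal.lift_lt.{1}]
    have hbd : ∀ x ∈ eFun β '' Set.Iio α, x < β := by
      rintro x ⟨ξ, _, rfl⟩; exact eFun_lt hβ0 hβ2 ξ
    rw [lift_otp0 hbd, lift_otp0 (himgbd α)]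
    apply otp_lt_of_top (b := β)
    · rintro x ⟨ξ, hξ, rfl⟩
      exact ⟨p ξ, hcp.2 ξ hξ, hp2 ξ⟩
    · exact ⟨q, hqα, hq2⟩
    · exact hbd

/-! ### Canonical functions are dominated by `hStar` -/

theorem canonical_iff {γ : Ordinal.{0}} {g : Ordinal.{0} → Ordinal.{0}} :
    Canonical γ g ↔
      ((∀ β, ∀ _ : β < γ, ∀ g', Canonical β g' → LtOnClub g' g) ∧
       ∀ h : Ordinal.{0} → Ordinal.{0},
         (∀ β, ∀ _ : β < γ, ∀ g', Canonical β g' → LtOnClub g' h) → BddOnClub g h) := by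
  unfold Canonical
  rw [WellFounded.fix_eq]

theorem canonical_le_hStar :
    ∀ γ : Ordinal.{0}, γ < omega2 → ∀ g, Canonical γ g → BddOnClub g (hStar γ) := by
  intro γ
  induction γ using Ordinal.induction with
  | h γ ih =>
    intro hγ g hg
    apply (canonical_iff.1 hg).2
    intro β hβ g' hg'
    obtain ⟨C1, hC1, hle⟩ := ih β hβ (hβ.trans hγ) g' hg'
    obtain ⟨C2, hC2, hlt⟩ := hStar_lt_hStar hβ hγ
    exact ⟨C1 ∩ C2, isClub_inter hC1 hC2,
      fun α hα => lt_of_le_of_lt (hle α hα.1) (hlt α hα.2)⟩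

/-! ### Lists and codes -/

def xl (x : ℕ → ℕ) (n : ℕ) : List ℕ := List.ofFn (fun i : Fin n => x i)

theorem xl_length (x : ℕ → ℕ) (n : ℕ) : (xl x n).length = n := List.length_ofFn

theorem xl_getElem (x : ℕ → ℕ) {n i : ℕ} (h : i < (xl x n).length) :
    (xl x n)[i] = x i := by
  simp [xl]

theorem xl_take (x : ℕ → ℕ) (m k : ℕ) : (xl x m).take k = xl x (min k m) := by
  apply List.ext_getElem
  · simp [xl]
  · intro i h1 h2
    rw [List.getElem_take, xl_getElem, xl_getElem]

def code (n : ℕ) : List ℕ := (Denumerable.ofNat (List ℕ) n.unpair.2).take n.unpair.1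

theorem code_length (n : ℕ) : (code n).length ≤ n :=
  le_trans (le_trans (List.length_take_le _ _) (le_refl _)) (Nat.unpair_left_le n)

theorem code_surj (l : List ℕ) : ∃ n, code n = l := by
  refine ⟨Nat.pair l.length (Encodable.encode l), ?_⟩
  rw [code, Nat.unpair_pair]
  simp [Denumerable.ofNat_encode]

/-! ### The tree of attempts -/

def Sx (S : Set (List ℕ × List ℕ)) (x : ℕ → ℕ) : Set (List ℕ) :=
  {σ | (xl x σ.length, σ) ∈ S}

theorem Sx_prefix {S : Set (List ℕ × List ℕ)} (hS : IsTreeN S) {x : ℕ → ℕ}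
    {σ τ : List ℕ} (hσ : σ ∈ Sx S x) (hτ : τ <+: σ) : τ ∈ Sx S x := by
  have h1 := (hS _ hσ).2 τ.length
  have h2 : σ.take τ.length = τ := (List.prefix_iff_eq_take.1 hτ).symm
  have h3 : (xl x σ.length).take τ.length = xl x τ.length := by
    rw [xl_take, min_eq_left hτ.length_le]
  have h1' : ((xl x σ.length).take τ.length, σ.take τ.length) ∈ S := h1
  rw [h2, h3] at h1'
  exact h1'

def rel (S : Set (List ℕ × List ℕ)) (x : ℕ → ℕ)
    (a b : {σ // σ ∈ Sx S x}) : Prop :=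
  (b : List ℕ) <+: (a : List ℕ) ∧ (b : List ℕ).length < (a : List ℕ).length

theorem wf_rel {S : Set (List ℕ × List ℕ)} (hS : IsTreeN S) {x : ℕ → ℕ}
    (hx : x ∉ projN S) : WellFounded (rel S x) := by
  classical
  by_contra hwf
  have hex : ∃ a, ¬ Acc (rel S x) a := by
    by_contra h; push_neg at h; exact hwf ⟨h⟩
  have step : ∀ a, ¬ Acc (rel S x) a → ∃ b, rel S x b a ∧ ¬ Acc (rel S x) b := by
    intro a ha
    by_contra h; push_neg at h
    exact ha (Acc.intro a (fun b hb => h b hb))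
  obtain ⟨a0, ha0⟩ := hex
  set seq : ℕ → {a : {σ // σ ∈ Sx S x} // ¬ Acc (rel S x) a} := fun n =>
    Nat.rec ⟨a0, ha0⟩ (fun _ p => ⟨(step p.1 p.2).choose, (step p.1 p.2).choose_spec.2⟩) n
    with hseqdef
  have hseq : ∀ n, rel S x (seq (n+1)).1 (seq n).1 :=
    fun n => (step (seq n).1 (seq n).2).choose_spec.1
  set a : ℕ → List ℕ := fun n => ((seq n).1 : List ℕ) with ha
  have hstep : ∀ n, a n <+: a (n+1) ∧ (a n).length < (a (n+1)).length := fun n => hseq n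
  have hchain : ∀ m n, m ≤ n → a m <+: a n := by
    intro m n hmn
    induction n with
    | zero => rw [Nat.le_zero.1 hmn]
    | succ n ihn =>
      rcases Nat.lt_or_ge m (n+1) with h | h
      · exact List.IsPrefix.trans (ihn (Nat.lt_succ_iff.1 h)) (hstep n).1
      · rw [Nat.le_antisymm hmn h]
  have hlen : ∀ n, n ≤ (a n).length := by
    intro n
    induction n with
    | zero => exact Nat.zero_le _
    | succ n ihn => exact Nat.lt_of_le_of_lt ihn (hstep n).2
  apply hx
  refine ⟨fun i => (a (i+1)).getD i 0, ?_⟩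
  intro n
  have hofn : List.ofFn (fun i : Fin n => (a (i+1)).getD i 0) = (a n).take n := by
    apply List.ext_getElem
    · simp only [List.length_ofFn, List.length_take]
      exact (min_eq_left (hlen n)).symm
    · intro i h1 h2
      simp only [List.getElem_ofFn, List.getElem_take]
      have hi1 : i < (a (i+1)).length := Nat.lt_of_lt_of_le (Nat.lt_succ_self i) (hlen (i+1))
      rw [List.getD_eq_getElem _ _ hi1]
      have hip : a (i+1) <+: a n :=
        hchain (i+1) n (by simp only [List.length_ofFn] at h1; omega)
      exact hip.getElem hi1
  rw [hofn]
  have hmem : a n ∈ Sx S x := ((seq n).1).2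
  have h1 := (hS _ hmem).2 n
  have h3 : (xl x (a n).length).take n = xl x n := by
    rw [xl_take, min_eq_left (hlen n)]
  have h1' : ((xl x (a n).length).take n, (a n).take n) ∈ S := h1
  rw [h3] at h1'
  exact h1'

/-! ### Rank bounds -/

open Classical in
noncomputable def Bx (S : Set (List ℕ × List ℕ)) (x : ℕ → ℕ) : Ordinal.{0} :=
  if h : WellFounded (rel S x) then
    ⨆ σ : {σ // σ ∈ Sx S x}, Order.succ ((h.apply σ).rank) else 0

theorem rank_lt_omega1 {S : Set (List ℕ × List ℕ)} {x : ℕ → ℕ}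
    (h : WellFounded (rel S x)) (σ : {σ // σ ∈ Sx S x}) :
    (h.apply σ).rank < omega1 := by
  induction σ using h.induction with
  | _ σ ih =>
    rw [Acc.rank_eq]
    apply sup_lt_omega1
    intro ⟨b, hb⟩
    exact omega1_isLimit.succ_lt (ih b hb)

theorem Bx_lt_omega1 {S : Set (List ℕ × List ℕ)} {x : ℕ → ℕ}
    (h : WellFounded (rel S x)) : Bx S x < omega1 := by
  rw [Bx, dif_pos h]
  apply sup_lt_omega1
  intro σ
  exact omega1_isLimit.succ_lt (rank_lt_omega1 h σ)

theorem rank_lt_Bx {S : Set (List ℕ × List ℕ)} {x : ℕ → ℕ}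
    (h : WellFounded (rel S x)) (σ : {σ // σ ∈ Sx S x}) :
    (h.apply σ).rank < Bx S x := by
  rw [Bx, dif_pos h]
  exact lt_of_lt_of_le (Order.lt_succ _) (Ordinal.le_iSup _ σ)

/-! ### The tree `TT` -/

def TT (S : Set (List ℕ × List ℕ)) (e : Ordinal.{0} → Ordinal.{0}) :
    Set (List ℕ × List Ordinal.{0}) :=
  {p | p.1.length = p.2.length ∧ (∀ o ∈ p.2, o < omega1) ∧
    ∀ i j, i < p.1.length → j < p.1.length →
      code i <+: code j → (code i).length < (code j).length →
      (p.1.take (code j).length, code j) ∈ S →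
      e (p.2.getD j 0) < e (p.2.getD i 0)}

theorem TT_isTree (S : Set (List ℕ × List ℕ)) (e : Ordinal.{0} → Ordinal.{0}) :
    IsTreeO (TT S e) := by
  rintro ⟨s, t⟩ ⟨hlen, hbd, hcond⟩
  refine ⟨hlen, fun n => ⟨?_, ?_, ?_⟩⟩
  · simp [hlen]
  · intro o ho
    exact hbd o (List.mem_of_mem_take ho)
  · intro i j hi hj hpre hlt hmem
    simp only [List.length_take, lt_min_iff] at hi hj
    have hcj : (code j).length ≤ n := le_trans (code_length j) hj.1.le
    have htt : (s.take n).take (code j).length = s.take (code j).length := by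
      rw [List.take_take, min_eq_left hcj]
    rw [htt] at hmem
    have hgd : ∀ k, k < n → k < s.length → (t.take n).getD k 0 = t.getD k 0 := by
      intro k h1 h2
      have h3 : k < t.length := hlen ▸ h2
      have h4 : k < (t.take n).length := by simp only [List.length_take, lt_min_iff]; exact ⟨h1, h3⟩
      rw [List.getD_eq_getElem _ _ h4, List.getD_eq_getElem _ _ h3, List.getElem_take]
    rw [hgd j hj.1 hj.2, hgd i hi.1 hi.2]
    exact hcond i j hi.2 hj.2 hpre hlt hmem

theorem no_desc (g : ℕ → Ordinal.{0}) (h : ∀ n, g (n+1) < g n) : False := by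
  have hne : (Set.range g).Nonempty := ⟨g 0, 0, rfl⟩
  obtain ⟨n, hn⟩ := Ordinal.lt_wf.min_mem (Set.range g) hne
  exact Ordinal.lt_wf.not_lt_min (Set.range g) ⟨n+1, rfl⟩ (hn ▸ h n)

theorem ofFn_getD {β : Type*} (y : ℕ → β) (d : β) {N j : ℕ} (h : j < N) :
    (List.ofFn (fun i : Fin N => y i)).getD j d = y j := by
  have h1 : j < (List.ofFn (fun i : Fin N => y i)).length := by simp [h]
  rw [List.getD_eq_getElem _ _ h1, List.getElem_ofFn]

theorem projO_TT_subset {S : Set (List ℕ × List ℕ)} (hS : IsTreeN S)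
    (e : Ordinal.{0} → Ordinal.{0}) {x : ℕ → ℕ} (hx : x ∈ projO (TT S e)) :
    x ∉ projN S := by
  obtain ⟨y, hy⟩ := hx
  rintro ⟨z, hz⟩
  choose nk hnk using fun k => code_surj (xl z k)
  apply no_desc (fun k => e (y (nk k)))
  intro k
  set N : ℕ := max (nk k) (nk (k+1)) + 1 with hN
  have hiN : nk k < N := by omega
  have hjN : nk (k+1) < N := by omega
  obtain ⟨hlen, hbd, hcond⟩ := hy N
  have hxlN : (xl x N).length = N := xl_length x N
  have hpre : code (nk k) <+: code (nk (k+1)) := by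
    rw [hnk k, hnk (k+1)]
    have := List.take_prefix k (xl z (k+1))
    rwa [xl_take, min_eq_left (by omega : k ≤ k+1)] at this
  have hlt : (code (nk k)).length < (code (nk (k+1))).length := by
    rw [hnk k, hnk (k+1), xl_length, xl_length]; omega
  have hmem : ((xl x N).take (code (nk (k+1))).length, code (nk (k+1))) ∈ S := by
    have hb : k + 1 ≤ N := by
      have := code_length (nk (k+1))
      rw [hnk (k+1), xl_length] at this
      omega
    rw [hnk (k+1), xl_length, xl_take, min_eq_left hb]
    exact hz (k+1)
  have := hcond (nk k) (nk (k+1)) (by simpa using hiN) (by simpa using hjN) hpre hlt hmem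
  rwa [ofFn_getD y 0 hjN, ofFn_getD y 0 hiN] at this

theorem mem_TT_below {S : Set (List ℕ × List ℕ)} (hS : IsTreeN S) {x : ℕ → ℕ}
    (hx : x ∉ projN S) (e : Ordinal.{0} → Ordinal.{0}) {α : Ordinal.{0}}
    (hα0 : 0 < α) (hα1 : α ≤ omega1)
    (hrk : Ordinal.lift.{1} (Bx S x) ≤ otp (e '' Set.Iio α)) :
    ∃ y : ℕ → Ordinal.{0}, (∀ i, y i < α) ∧
      ∀ n : ℕ, (List.ofFn (fun i : Fin n => x i), List.ofFn (fun i : Fin n => y i)) ∈ TT S e := by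
  classical
  have hwf := wf_rel hS hx
  obtain ⟨j, hj1, hj2⟩ := emb_of_le_otp hrk
  have hpre : ∀ ξ, ξ < Bx S x → ∃ ζ, ζ < α ∧ e ζ = j ξ := by
    intro ξ hξ
    obtain ⟨ζ, hζ, hev⟩ := hj2 ξ hξ
    exact ⟨ζ, hζ, hev⟩
  set y : ℕ → Ordinal.{0} := fun i =>
    if h : code i ∈ Sx S x then
      (hpre ((hwf.apply ⟨code i, h⟩).rank) (rank_lt_Bx hwf _)).choose else 0 with hydef
  have hy1 : ∀ i, y i < α := by
    intro i
    by_cases h : code i ∈ Sx S x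
    · simp only [hydef, dif_pos h]
      exact (hpre ((hwf.apply ⟨code i, h⟩).rank) (rank_lt_Bx hwf _)).choose_spec.1
    · simp only [hydef, dif_neg h]
      exact hα0
  have hy2 : ∀ i (h : code i ∈ Sx S x),
      e (y i) = j ((hwf.apply ⟨code i, h⟩).rank) := by
    intro i h
    simp only [hydef, dif_pos h]
    exact (hpre ((hwf.apply ⟨code i, h⟩).rank) (rank_lt_Bx hwf _)).choose_spec.2
  refine ⟨y, hy1, ?_⟩
  intro n
  refine ⟨by simp, ?_, ?_⟩
  · intro o ho
    rw [List.mem_ofFn] at ho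
    obtain ⟨i, rfl⟩ := ho
    exact lt_of_lt_of_le (hy1 _) hα1
  · intro i j' hi hj' hpre' hlt' hmem'
    simp only [List.length_ofFn] at hi hj'
    have hcjlen : (code j').length ≤ n := le_trans (code_length j') hj'.le
    have hcj : code j' ∈ Sx S x := by
      show (xl x (code j').length, code j') ∈ S
      have : (xl x n).take (code j').length = xl x (code j').length := by
        rw [xl_take, min_eq_left hcjlen]
      rw [← this]
      exact hmem'
    have hci : code i ∈ Sx S x := Sx_prefix hS hcj hpre'
    have hrel : rel S x ⟨code j', hcj⟩ ⟨code i, hci⟩ := ⟨hpre', hlt'⟩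
    have hrk2 : (hwf.apply ⟨code j', hcj⟩).rank < (hwf.apply ⟨code i, hci⟩).rank :=
      Acc.rank_lt_of_rel (hwf.apply _) hrel
    rw [ofFn_getD y 0 hj', ofFn_getD y 0 hi, hy2 j' hcj, hy2 i hci]
    exact hj1 _ _ hrk2 (rank_lt_Bx hwf _)

theorem stmt_10 (hB : Bounding) (S : Set (List ℕ × List ℕ)) (hS : IsTreeN S)
    (f : Ordinal.{0} → (ℕ → ℕ)) (hf : ∀ α, α < omega1 → f α ∉ projN S) :
    ∃ T : Set (List ℕ × List Ordinal.{0}), IsTreeO T ∧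
      (∀ p ∈ T, ∀ o ∈ p.2, o < omega1) ∧
      projO T = {x : ℕ → ℕ | x ∉ projN S} ∧
      ∃ C, IsClub C ∧ ∀ α ∈ C, f α ∈ projOBelow T α := by
  classical
  set g0 : Ordinal.{0} → Ordinal.{0} := fun α => if α < omega1 then Bx S (f α) else 0 with hg0
  have hg0b : ∀ α, α < omega1 → g0 α < omega1 := by
    intro α hα
    simp only [hg0, if_pos hα]
    exact Bx_lt_omega1 (wf_rel hS (hf α hα))
  obtain ⟨γ, hγ2, g, hcan, C0, hC0, hle0⟩ := hB g0 hg0b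
  set γ' : Ordinal.{0} := max γ omega1 with hγ'def
  have hγ'2 : γ' < omega2 := max_lt hγ2 omega1_lt_omega2
  have hγ'0 : 0 < γ' := lt_of_lt_of_le omega1_pos (le_max_right _ _)
  have hω1γ' : omega1 ≤ γ' := le_max_right _ _
  set e : Ordinal.{0} → Ordinal.{0} := eFun γ' with he
  have hebd : ∀ (α : Ordinal.{0}), ∀ w ∈ e '' Set.Iio α, w < γ' := by
    rintro α w ⟨ξ, _, rfl⟩
    exact eFun_lt hγ'0 hγ'2 ξ
  have himg : e '' Set.Iio omega1 = Set.Iio γ' := by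
    ext ζ
    constructor
    · rintro ⟨ξ, _, rfl⟩
      exact eFun_lt hγ'0 hγ'2 ξ
    · intro hζ
      obtain ⟨ξ, hξ, hev⟩ := eFun_surj hγ'0 hγ'2 hζ
      exact ⟨ξ, hξ, hev⟩
  refine ⟨TT S e, TT_isTree S e, ?_, ?_, ?_⟩
  · rintro p hp o ho
    exact hp.2.1 o ho
  · ext x
    simp only [Set.mem_setOf_eq]
    constructor
    · exact fun hx => projO_TT_subset hS e hx
    · intro hx
      have hwf := wf_rel hS hx
      have hrk : Ordinal.lift.{1} (Bx S x) ≤ otp (e '' Set.Iio omega1) := by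
        rw [himg, otp_Iio, Ordinal.lift_le]
        exact le_trans (le_of_lt (Bx_lt_omega1 hwf)) hω1γ'
      obtain ⟨y, _, hy⟩ := mem_TT_below hS hx e omega1_pos (le_refl _) hrk
      exact ⟨y, hy⟩
  · obtain ⟨C1, hC1, hle1⟩ := canonical_le_hStar γ hγ2 g hcan
    obtain ⟨C2, hC2, hle2⟩ : ∃ C2, IsClub C2 ∧ ∀ α ∈ C2, hStar γ α ≤ hStar γ' α := by
      rcases eq_or_lt_of_le (le_max_left γ omega1) with hq | hq
      · exact ⟨Set.Iio omega1, isClub_Iio, fun α _ => le_of_eq (by rw [hq])⟩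
      · obtain ⟨C2, hC2, h2⟩ := hStar_lt_hStar hq hγ'2
        exact ⟨C2, hC2, fun α hα => le_of_lt (h2 α hα)⟩
    refine ⟨C0 ∩ C1 ∩ C2 ∩ {c : Ordinal.{0} | 0 < c ∧ c < omega1},
      isClub_inter (isClub_inter (isClub_inter hC0 hC1) hC2) (isClub_tail omega1_pos), ?_⟩
    rintro α ⟨⟨⟨hα0, hα1⟩, hα2⟩, hα3, hα4⟩
    have hxp : f α ∉ projN S := hf α hα4
    have hBxle : Bx S (f α) ≤ hStar γ' α := by
      have e1 : Bx S (f α) = g0 α := by simp only [hg0, if_pos hα4]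
      calc Bx S (f α) = g0 α := e1
        _ ≤ g α := hle0 α hα0
        _ ≤ hStar γ α := hle1 α hα1
        _ ≤ hStar γ' α := hle2 α hα2
    have hsγ' : hStar γ' α = otp0 (e '' Set.Iio α) := by
      rw [hStar, if_neg hγ'0.ne']
    have hrk : Ordinal.lift.{1} (Bx S (f α)) ≤ otp (e '' Set.Iio α) := by
      rw [← lift_otp0 (hebd α), Ordinal.lift_le]
      rw [hsγ'] at hBxle
      exact hBxle
    obtain ⟨y, hy1, hy2⟩ := mem_TT_below hS hxp e hα3 (le_of_lt hα4) hrk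
    exact ⟨y, hy1, hy2⟩

end P746
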